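/- Let C, K be nontrivial cones in a real normed space X. The following are equivalent: (i) 0 ∉ cl(S_C − S_K); (ii) there exists x* ∈ X* \ {0} with sup_{k ∈ cl S_K} x*(k) < inf_{c ∈ cl S_C} x*(c); (iii) there exists x* ∈ X* \ {0} such that sup_{k ∈ cl S_K⁰} x*(k) < inf_{c ∈ cl S_C} x*(c) or sup_{k ∈ cl S_K} x*(k) < inf_{c ∈ cl S_C⁰} x*(c); (iv) 0 ∉ cl(S_C − S_K⁰) or 0 ∉ cl(S_C⁰ − S_K). -/

import Mathlib

open Set Pointwise

def IsCone {X : Type*} [NormedAddCommGroup X] [NormedSpace ℝ X] (C : Set X) : Prop :=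
  0 ∈ C ∧ ∀ t : ℝ, 0 ≤ t → ∀ x ∈ C, t • x ∈ C

section Aux
variable {X : Type*} [NormedAddCommGroup X] [NormedSpace ℝ X]

lemma aux_bddAbove (f : X →L[ℝ] ℝ) {Q : Set X} (h : Q ⊆ Metric.closedBall 0 1) :
    BddAbove (f '' Q) := by
  refine ⟨‖f‖, ?_⟩
  rintro _ ⟨x, hx, rfl⟩
  have h1 : ‖x‖ ≤ 1 := by simpa [Metric.mem_closedBall] using h hx
  calc f x ≤ ‖f x‖ := le_abs_self _
    _ ≤ ‖f‖ * ‖x‖ := f.le_opNorm x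
    _ ≤ ‖f‖ * 1 := by nlinarith [norm_nonneg f]
    _ = ‖f‖ := mul_one _

lemma aux_bddBelow (f : X →L[ℝ] ℝ) {Q : Set X} (h : Q ⊆ Metric.closedBall 0 1) :
    BddBelow (f '' Q) := by
  refine ⟨-‖f‖, ?_⟩
  rintro _ ⟨x, hx, rfl⟩
  have h1 : ‖x‖ ≤ 1 := by simpa [Metric.mem_closedBall] using h hx
  have : ‖f x‖ ≤ ‖f‖ := le_trans (f.le_opNorm x) (by nlinarith [norm_nonneg f])
  have := abs_le.mp this
  linarith [this.1]

/-- Key separation lemma -/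
lemma aux_sep {P Q : Set X} (hP : Convex ℝ P) (hQ : Convex ℝ Q)
    (hPne : P.Nonempty) (hQne : Q.Nonempty)
    (hPb : P ⊆ Metric.closedBall 0 1) (hQb : Q ⊆ Metric.closedBall 0 1) :
    (0 : X) ∉ closure (P - Q) ↔
      ∃ f : X →L[ℝ] ℝ, f ≠ 0 ∧ sSup (f '' closure Q) < sInf (f '' closure P) := by
  have hPcb : closure P ⊆ Metric.closedBall 0 1 :=
    closure_minimal hPb Metric.isClosed_closedBall
  have hQcb : closure Q ⊆ Metric.closedBall 0 1 :=
    closure_minimal hQb Metric.isClosed_closedBall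
  constructor
  · intro h0
    obtain ⟨f, u, hfu, hsep⟩ := geometric_hahn_banach_point_closed
      ((hP.sub hQ).closure) isClosed_closure h0
    have hu : 0 < u := by simpa using hfu
    have key : ∀ a ∈ closure P, ∀ b ∈ closure Q, u < f a - f b := by
      intro a ha b hb
      have : a - b ∈ closure (P - Q) :=
        map_mem_closure₂ continuous_sub ha hb (fun x hx y hy => sub_mem_sub hx hy)
      have := hsep _ this
      simpa using this
    have hlt : sSup (f '' closure Q) < sInf (f '' closure P) := by
      obtain ⟨a0, ha0⟩ := hPne
      have ha0' : a0 ∈ closure P := subset_closure ha0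
      obtain ⟨b0, hb0⟩ := hQne
      have hsup : ∀ a ∈ closure P, sSup (f '' closure Q) ≤ f a - u := by
        intro a ha
        refine csSup_le ⟨f b0, b0, subset_closure hb0, rfl⟩ ?_
        rintro _ ⟨b, hb, rfl⟩
        linarith [key a ha b hb]
      have hinf : sSup (f '' closure Q) + u ≤ sInf (f '' closure P) := by
        refine le_csInf ⟨f a0, a0, subset_closure ha0, rfl⟩ ?_
        rintro _ ⟨a, ha, rfl⟩
        linarith [hsup a ha]
      linarith
    refine ⟨f, ?_, hlt⟩
    intro hf0
    obtain ⟨a0, ha0⟩ := hPne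
    obtain ⟨b0, hb0⟩ := hQne
    have := key a0 (subset_closure ha0) b0 (subset_closure hb0)
    rw [hf0] at this
    simp at this
    linarith
  · rintro ⟨f, hf0, hlt⟩ h0
    set δ := sInf (f '' closure P) - sSup (f '' closure Q) with hδ
    have hδpos : 0 < δ := by linarith
    have hcl : ∀ z ∈ P - Q, δ ≤ f z := by
      rintro z ⟨a, ha, b, hb, rfl⟩
      have h1 : sInf (f '' closure P) ≤ f a :=
        csInf_le (aux_bddBelow f hPcb) ⟨a, subset_closure ha, rfl⟩
      have h2 : f b ≤ sSup (f '' closure Q) :=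
        le_csSup (aux_bddAbove f hQcb) ⟨b, subset_closure hb, rfl⟩
      have : f (a - b) = f a - f b := by simp
      linarith [this ▸ (by linarith : δ ≤ f a - f b)]
    have hclosed : IsClosed {x : X | δ ≤ f x} := isClosed_le continuous_const f.continuous
    have : (0 : X) ∈ {x : X | δ ≤ f x} := hclosed.closure_subset_iff.mpr hcl h0
    simp at this
    linarith

lemma aux_hull_ball {s : Set X} (hs : s ⊆ Metric.closedBall 0 1) :
    convexHull ℝ s ⊆ Metric.closedBall 0 1 :=
  convexHull_min hs (convex_closedBall 0 1)

lemma aux_hull_ball0 {s : Set X} (hs : s ⊆ Metric.closedBall 0 1) :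
    convexHull ℝ ({0} ∪ s) ⊆ Metric.closedBall 0 1 :=
  convexHull_min (union_subset (by simp) hs) (convex_closedBall 0 1)

lemma aux_sSup_union0 (f : X →L[ℝ] ℝ) {s : Set X} (hs : s ⊆ Metric.closedBall 0 1)
    (hne : s.Nonempty) :
    sSup (f '' closure (convexHull ℝ ({0} ∪ s))) ≤
      max 0 (sSup (f '' closure (convexHull ℝ s))) := by
  set M := max 0 (sSup (f '' closure (convexHull ℝ s))) with hM
  have hsubM : closure (convexHull ℝ ({0} ∪ s)) ⊆ {x : X | f x ≤ M} := by
    have hconv : Convex ℝ {x : X | f x ≤ M} :=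
      convex_halfSpace_le (f.toLinearMap.isLinear) M
    have hclosed : IsClosed {x : X | f x ≤ M} := isClosed_le f.continuous continuous_const
    refine hclosed.closure_subset_iff.mpr (convexHull_min ?_ hconv)
    rintro x (rfl | hx)
    · simp [hM]
    · have : f x ≤ sSup (f '' closure (convexHull ℝ s)) :=
        le_csSup (aux_bddAbove f (closure_minimal (aux_hull_ball hs) Metric.isClosed_closedBall))
          ⟨x, subset_closure (subset_convexHull ℝ s hx), rfl⟩
      exact le_trans this (le_max_right _ _)
  obtain ⟨x0, hx0⟩ := hne
  refine csSup_le ⟨f x0, x0, subset_closure (subset_convexHull ℝ _ (Or.inr hx0)), rfl⟩ ?_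
  rintro _ ⟨x, hx, rfl⟩
  exact hsubM hx

lemma aux_sInf_union0 (f : X →L[ℝ] ℝ) {s : Set X} (hs : s ⊆ Metric.closedBall 0 1)
    (hne : s.Nonempty) :
    min 0 (sInf (f '' closure (convexHull ℝ s))) ≤
      sInf (f '' closure (convexHull ℝ ({0} ∪ s))) := by
  set M := min 0 (sInf (f '' closure (convexHull ℝ s))) with hM
  have hsubM : closure (convexHull ℝ ({0} ∪ s)) ⊆ {x : X | M ≤ f x} := by
    have hconv : Convex ℝ {x : X | M ≤ f x} :=
      convex_halfSpace_ge (f.toLinearMap.isLinear) M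
    have hclosed : IsClosed {x : X | M ≤ f x} := isClosed_le continuous_const f.continuous
    refine hclosed.closure_subset_iff.mpr (convexHull_min ?_ hconv)
    rintro x (rfl | hx)
    · simp [hM]
    · have : sInf (f '' closure (convexHull ℝ s)) ≤ f x :=
        csInf_le (aux_bddBelow f (closure_minimal (aux_hull_ball hs) Metric.isClosed_closedBall))
          ⟨x, subset_closure (subset_convexHull ℝ s hx), rfl⟩
      exact le_trans (min_le_right _ _) this
  obtain ⟨x0, hx0⟩ := hne
  refine le_csInf ⟨f x0, x0, subset_closure (subset_convexHull ℝ _ (Or.inr hx0)), rfl⟩ ?_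
  rintro _ ⟨x, hx, rfl⟩
  exact hsubM hx

lemma aux_sSup_mono (f : X →L[ℝ] ℝ) {s t : Set X} (hst : s ⊆ t)
    (ht : t ⊆ Metric.closedBall 0 1) (hne : s.Nonempty) :
    sSup (f '' closure s) ≤ sSup (f '' closure t) :=
  csSup_le_csSup (aux_bddAbove f (closure_minimal ht Metric.isClosed_closedBall))
    (hne.mono subset_closure |>.image f)
    (image_mono (f := f) (closure_mono hst))

lemma aux_sInf_mono (f : X →L[ℝ] ℝ) {s t : Set X} (hst : s ⊆ t)
    (ht : t ⊆ Metric.closedBall 0 1) (hne : s.Nonempty) :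
    sInf (f '' closure t) ≤ sInf (f '' closure s) :=
  csInf_le_csInf (aux_bddBelow f (closure_minimal ht Metric.isClosed_closedBall))
    (hne.mono subset_closure |>.image f)
    (image_mono (f := f) (closure_mono hst))

lemma aux_cone_sphere_ne {C : Set X} (hC : IsCone C) (h : C ≠ {0}) :
    (C ∩ Metric.sphere (0:X) 1).Nonempty := by
  obtain ⟨x, hxC, hx0⟩ : ∃ x ∈ C, x ≠ 0 := by
    by_contra hcon
    push_neg at hcon
    exact h (Subset.antisymm (fun x hx => hcon x hx) (by simpa using hC.1))
  have hn : ‖x‖ ≠ 0 := norm_ne_zero_iff.mpr hx0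
  refine ⟨‖x‖⁻¹ • x, hC.2 _ (by positivity) x hxC, ?_⟩
  simp [norm_smul, abs_of_nonneg (inv_nonneg.mpr (norm_nonneg x)), inv_mul_cancel₀ hn]

end Aux

theorem symmetric_separation_conditions_tfae
    {X : Type*} [NormedAddCommGroup X] [NormedSpace ℝ X]
    (C K : Set X) (hC : IsCone C) (hK : IsCone K)
    (hCnt : C ≠ {0} ∧ C ≠ Set.univ) (hKnt : K ≠ {0} ∧ K ≠ Set.univ) :
    (((0 : X) ∉ closure (convexHull ℝ (C ∩ Metric.sphere (0:X) 1) -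
          convexHull ℝ (K ∩ Metric.sphere (0:X) 1))) ↔
      (∃ f : X →L[ℝ] ℝ, f ≠ 0 ∧
        sSup (f '' closure (convexHull ℝ (K ∩ Metric.sphere (0:X) 1))) <
          sInf (f '' closure (convexHull ℝ (C ∩ Metric.sphere (0:X) 1))))) ∧
    ((∃ f : X →L[ℝ] ℝ, f ≠ 0 ∧
        sSup (f '' closure (convexHull ℝ (K ∩ Metric.sphere (0:X) 1))) <
          sInf (f '' closure (convexHull ℝ (C ∩ Metric.sphere (0:X) 1)))) ↔
      (∃ f : X →L[ℝ] ℝ, f ≠ 0 ∧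
        (sSup (f '' closure (convexHull ℝ ({0} ∪ (K ∩ Metric.sphere (0:X) 1)))) <
            sInf (f '' closure (convexHull ℝ (C ∩ Metric.sphere (0:X) 1))) ∨
          sSup (f '' closure (convexHull ℝ (K ∩ Metric.sphere (0:X) 1))) <
            sInf (f '' closure (convexHull ℝ ({0} ∪ (C ∩ Metric.sphere (0:X) 1))))))) ∧
    ((∃ f : X →L[ℝ] ℝ, f ≠ 0 ∧
        (sSup (f '' closure (convexHull ℝ ({0} ∪ (K ∩ Metric.sphere (0:X) 1)))) <
            sInf (f '' closure (convexHull ℝ (C ∩ Metric.sphere (0:X) 1))) ∨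
          sSup (f '' closure (convexHull ℝ (K ∩ Metric.sphere (0:X) 1))) <
            sInf (f '' closure (convexHull ℝ ({0} ∪ (C ∩ Metric.sphere (0:X) 1)))))) ↔
      ((0 : X) ∉ closure (convexHull ℝ (C ∩ Metric.sphere (0:X) 1) -
          convexHull ℝ ({0} ∪ (K ∩ Metric.sphere (0:X) 1))) ∨
        (0 : X) ∉ closure (convexHull ℝ ({0} ∪ (C ∩ Metric.sphere (0:X) 1)) -
          convexHull ℝ (K ∩ Metric.sphere (0:X) 1)))) := by
  set sC := C ∩ Metric.sphere (0:X) 1 with hsC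
  set sK := K ∩ Metric.sphere (0:X) 1 with hsK
  have hsCne : sC.Nonempty := aux_cone_sphere_ne hC hCnt.1
  have hsKne : sK.Nonempty := aux_cone_sphere_ne hK hKnt.1
  have hsCb : sC ⊆ Metric.closedBall 0 1 := fun x hx =>
    Metric.sphere_subset_closedBall hx.2
  have hsKb : sK ⊆ Metric.closedBall 0 1 := fun x hx =>
    Metric.sphere_subset_closedBall hx.2
  have hsC0b : ({0} : Set X) ∪ sC ⊆ Metric.closedBall 0 1 :=
    union_subset (by simp) hsCb
  have hsK0b : ({0} : Set X) ∪ sK ⊆ Metric.closedBall 0 1 :=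
    union_subset (by simp) hsKb
  have hCne0 : (({0} : Set X) ∪ sC).Nonempty := hsCne.mono subset_union_right
  have hKne0 : (({0} : Set X) ∪ sK).Nonempty := hsKne.mono subset_union_right
  have hCh : (convexHull ℝ sC).Nonempty := hsCne.mono (subset_convexHull ℝ _)
  have hKh : (convexHull ℝ sK).Nonempty := hsKne.mono (subset_convexHull ℝ _)
  have hCh0 : (convexHull ℝ (({0} : Set X) ∪ sC)).Nonempty := hCne0.mono (subset_convexHull ℝ _)
  have hKh0 : (convexHull ℝ (({0} : Set X) ∪ sK)).Nonempty := hKne0.mono (subset_convexHull ℝ _)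
  have hiff1 := aux_sep (convex_convexHull ℝ sC) (convex_convexHull ℝ sK)
    hCh hKh (aux_hull_ball hsCb) (aux_hull_ball hsKb)
  have hiff2 := aux_sep (convex_convexHull ℝ sC) (convex_convexHull ℝ (({0} : Set X) ∪ sK))
    hCh hKh0 (aux_hull_ball hsCb) (aux_hull_ball hsK0b)
  have hiff3 := aux_sep (convex_convexHull ℝ (({0} : Set X) ∪ sC)) (convex_convexHull ℝ sK)
    hCh0 hKh (aux_hull_ball hsC0b) (aux_hull_ball hsKb)
  have hmid : (∃ f : X →L[ℝ] ℝ, f ≠ 0 ∧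
        sSup (f '' closure (convexHull ℝ sK)) < sInf (f '' closure (convexHull ℝ sC))) ↔
      (∃ f : X →L[ℝ] ℝ, f ≠ 0 ∧
        (sSup (f '' closure (convexHull ℝ (({0} : Set X) ∪ sK))) <
            sInf (f '' closure (convexHull ℝ sC)) ∨
          sSup (f '' closure (convexHull ℝ sK)) <
            sInf (f '' closure (convexHull ℝ (({0} : Set X) ∪ sC))))) := by
    constructor
    · rintro ⟨f, hf0, hlt⟩
      refine ⟨f, hf0, ?_⟩
      rcases lt_or_ge 0 (sInf (f '' closure (convexHull ℝ sC))) with hpos | hneg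
      · left
        refine lt_of_le_of_lt (aux_sSup_union0 f hsKb hsKne) ?_
        exact max_lt hpos hlt
      · right
        have h1 := aux_sInf_union0 f hsCb hsCne
        have h2 : min 0 (sInf (f '' closure (convexHull ℝ sC))) =
            sInf (f '' closure (convexHull ℝ sC)) := min_eq_right hneg
        linarith
    · rintro ⟨f, hf0, hlt | hlt⟩
      · exact ⟨f, hf0, lt_of_le_of_lt
          (aux_sSup_mono f (convexHull_mono subset_union_right) (aux_hull_ball hsK0b) hKh) hlt⟩
      · exact ⟨f, hf0, lt_of_lt_of_le hlt
          (aux_sInf_mono f (convexHull_mono subset_union_right) (aux_hull_ball hsC0b) hCh)⟩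
  refine ⟨hiff1, hmid, ?_⟩
  constructor
  · rintro ⟨f, hf0, hlt | hlt⟩
    · exact Or.inl (hiff2.mpr ⟨f, hf0, hlt⟩)
    · exact Or.inr (hiff3.mpr ⟨f, hf0, hlt⟩)
  · rintro (h | h)
    · obtain ⟨f, hf0, hlt⟩ := hiff2.mp h
      exact ⟨f, hf0, Or.inl hlt⟩
    · obtain ⟨f, hf0, hlt⟩ := hiff3.mp h
      exact ⟨f, hf0, Or.inr hlt⟩
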